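/- For 1/2 < Δ and δ ∈ (0, e^{−e}), the modulus of continuity of the covariance function r(t) = 2·Σ_{k=1}^∞ k^{−2Δ}·cos(2^{2^k}·t) satisfies ω[r](δ) ≥ C·(ln|ln δ|)^{−2Δ} for some constant C > 0; in particular ω[r](δ)/δ^α → ∞ as δ → 0+ for every α > 0, so r is not Hölder continuous of any positive order. -/

import Mathlib

open Real Filter Topology

/-- The covariance function `r(t) = 2 Σ_{k=1}^∞ k^{-2Δ} cos(2^{2^k} t)`. -/
noncomputable def covFun (Δ : ℝ) (t : ℝ) : ℝ :=
  2 * ∑' k : ℕ, ((k : ℝ) + 1) ^ (-(2 * Δ)) * Real.cos ((2 : ℝ) ^ (2 ^ (k + 1)) * t)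

/-- Modulus of continuity of a real-valued function on ℝ. -/
noncomputable def modContR (f : ℝ → ℝ) (δ : ℝ) : ℝ :=
  sSup {y : ℝ | ∃ t h : ℝ, |h| ≤ δ ∧ y = |f (t + h) - f t|}

lemma aux_summable {Δ : ℝ} (hΔ : 1 / 2 < Δ) :
    Summable (fun k : ℕ => ((k : ℝ) + 1) ^ (-(2 * Δ))) := by
  have h : Summable (fun n : ℕ => (n : ℝ) ^ (-(2 * Δ))) :=
    Real.summable_nat_rpow.2 (by linarith)
  have := (summable_nat_add_iff 1).2 h
  refine this.congr fun n => ?_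
  push_cast
  ring_nf

lemma aux_summable_cos {Δ : ℝ} (hΔ : 1 / 2 < Δ) (t : ℝ) :
    Summable (fun k : ℕ => ((k : ℝ) + 1) ^ (-(2 * Δ)) * Real.cos ((2 : ℝ) ^ (2 ^ (k + 1)) * t)) := by
  refine Summable.of_norm_bounded (aux_summable hΔ) fun k => ?_
  rw [Real.norm_eq_abs, abs_mul, abs_of_nonneg (Real.rpow_nonneg (by positivity) _)]
  exact mul_le_of_le_one_right (Real.rpow_nonneg (by positivity) _) (abs_cos_le_one _)

lemma aux_bound {Δ : ℝ} (hΔ : 1 / 2 < Δ) (t : ℝ) :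
    |covFun Δ t| ≤ 2 * ∑' k : ℕ, ((k : ℝ) + 1) ^ (-(2 * Δ)) := by
  rw [covFun, abs_mul, abs_two]
  gcongr
  rw [← Real.norm_eq_abs]
  refine tsum_of_norm_bounded (aux_summable hΔ).hasSum fun k => ?_
  rw [Real.norm_eq_abs, abs_mul, abs_of_nonneg (Real.rpow_nonneg (by positivity) _)]
  exact mul_le_of_le_one_right (Real.rpow_nonneg (by positivity) _) (abs_cos_le_one _)

lemma aux_bddAbove {Δ : ℝ} (hΔ : 1 / 2 < Δ) (δ : ℝ) :
    BddAbove {y : ℝ | ∃ t h : ℝ, |h| ≤ δ ∧ y = |covFun Δ (t + h) - covFun Δ t|} := by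
  refine ⟨4 * ∑' k : ℕ, ((k : ℝ) + 1) ^ (-(2 * Δ)), ?_⟩
  rintro y ⟨t, h, -, rfl⟩
  calc |covFun Δ (t + h) - covFun Δ t| ≤ |covFun Δ (t + h)| + |covFun Δ t| := abs_sub _ _
    _ ≤ 2 * ∑' k : ℕ, ((k : ℝ) + 1) ^ (-(2 * Δ)) + 2 * ∑' k : ℕ, ((k : ℝ) + 1) ^ (-(2 * Δ)) :=
        add_le_add (aux_bound hΔ _) (aux_bound hΔ _)
    _ = _ := by ring

private lemma aux_arith {k L l2 : ℝ} (hk0 : 0 ≤ k) (hL : 1 < L) (h1 : k * l2 < 3 * L)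
    (h2 : 0.6931471803 < l2) (h3 : l2 < 0.6931471808) : k + 1 ≤ 6 * L := by
  nlinarith [mul_pos (sub_pos.2 hL) (sub_pos.2 h2)]

lemma aux_lower {Δ : ℝ} (hΔ : 1 / 2 < Δ) {δ : ℝ}
    (hδ : δ ∈ Set.Ioo (0 : ℝ) (Real.exp (-(Real.exp 1)))) :
    4 * (6 : ℝ) ^ (-(2 * Δ)) * Real.log |Real.log δ| ^ (-(2 * Δ)) ≤ modContR (covFun Δ) δ := by
  classical
  obtain ⟨hδ0, hδe⟩ := hδ
  have hX : Real.exp 1 < -Real.log δ := by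
    have := Real.log_lt_log hδ0 hδe
    rw [Real.log_exp] at this; linarith
  have hXpos : 0 < -Real.log δ := lt_trans (Real.exp_pos 1) hX
  have habs : |Real.log δ| = -Real.log δ := abs_of_neg (by linarith)
  have hL : 1 < Real.log (-Real.log δ) := by
    have := Real.log_lt_log (Real.exp_pos 1) hX
    rwa [Real.log_exp] at this
  set X := -Real.log δ with hXdef
  set L := Real.log X with hLdef
  -- existence of an index
  have hex : ∃ k : ℕ, π ≤ δ * (2 : ℝ) ^ (2 ^ (k + 1)) := by
    obtain ⟨n, hn⟩ := exists_nat_ge (π / δ)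
    refine ⟨n, ?_⟩
    rw [div_le_iff₀ hδ0] at hn
    have h1 : (n : ℝ) ≤ (2 : ℝ) ^ (2 ^ (n + 1)) := by
      have hn1 : n ≤ 2 ^ (2 ^ (n + 1)) := by
        calc n ≤ 2 ^ n := (Nat.lt_two_pow_self (n := n)).le
          _ ≤ 2 ^ (2 ^ (n + 1)) := Nat.pow_le_pow_right (by norm_num)
              (le_trans (Nat.lt_two_pow_self (n := n)).le (Nat.pow_le_pow_right (by norm_num) (Nat.le_succ n)))
      calc (n : ℝ) ≤ ((2 ^ (2 ^ (n + 1)) : ℕ) : ℝ) := by exact_mod_cast hn1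
        _ = (2 : ℝ) ^ (2 ^ (n + 1)) := by push_cast; ring
    calc π ≤ (n : ℝ) * δ := hn
      _ ≤ (2 : ℝ) ^ (2 ^ (n + 1)) * δ := by
          exact mul_le_mul_of_nonneg_right h1 hδ0.le
      _ = δ * (2 : ℝ) ^ (2 ^ (n + 1)) := mul_comm _ _
  obtain ⟨k, hk, hmink⟩ : ∃ k : ℕ, π ≤ δ * (2 : ℝ) ^ (2 ^ (k + 1)) ∧
      ∀ j < k, ¬ π ≤ δ * (2 : ℝ) ^ (2 ^ (j + 1)) :=
    ⟨Nat.find hex, Nat.find_spec hex, fun j hj => Nat.find_min hex hj⟩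
  set h := π / (2 : ℝ) ^ (2 ^ (k + 1)) with hhdef
  have hpow : (0 : ℝ) < (2 : ℝ) ^ (2 ^ (k + 1)) := by positivity
  have hh0 : 0 < h := div_pos pi_pos hpow
  have hhδ : h ≤ δ := (div_le_iff₀ hpow).2 (by linarith)
  -- the element of the set
  have hmem : |covFun Δ (0 + h) - covFun Δ 0| ∈
      {y : ℝ | ∃ t h' : ℝ, |h'| ≤ δ ∧ y = |covFun Δ (t + h') - covFun Δ t|} :=
    ⟨0, h, by rwa [abs_of_pos hh0], rfl⟩
  have hsup := le_csSup (aux_bddAbove hΔ δ) hmem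
  -- compute the difference
  have h0 : covFun Δ 0 = 2 * ∑' j : ℕ, ((j : ℝ) + 1) ^ (-(2 * Δ)) := by
    unfold covFun; simp
  have hsum2 : Summable (fun j : ℕ =>
      ((j : ℝ) + 1) ^ (-(2 * Δ)) * (1 - Real.cos ((2 : ℝ) ^ (2 ^ (j + 1)) * h))) :=
    ((aux_summable hΔ).sub (aux_summable_cos hΔ h)).congr fun j => by ring
  have hdiff : covFun Δ 0 - covFun Δ (0 + h)
      = 2 * ∑' j : ℕ, ((j : ℝ) + 1) ^ (-(2 * Δ)) * (1 - Real.cos ((2 : ℝ) ^ (2 ^ (j + 1)) * h)) := by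
    rw [h0, zero_add, covFun, ← mul_sub,
      ← Summable.tsum_sub (aux_summable hΔ) (aux_summable_cos hΔ h)]
    congr 1
    exact tsum_congr fun j => by ring
  have hcos : (2 : ℝ) ^ (2 ^ (k + 1)) * h = π := by
    rw [hhdef]; field_simp
  have hterm : ((k : ℝ) + 1) ^ (-(2 * Δ)) * (1 - Real.cos ((2 : ℝ) ^ (2 ^ (k + 1)) * h))
      ≤ ∑' j : ℕ, ((j : ℝ) + 1) ^ (-(2 * Δ)) * (1 - Real.cos ((2 : ℝ) ^ (2 ^ (j + 1)) * h)) :=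
    Summable.le_tsum hsum2 k fun j _ => mul_nonneg (Real.rpow_nonneg (by positivity) _)
      (by nlinarith [Real.cos_le_one ((2 : ℝ) ^ (2 ^ (j + 1)) * h)])
  rw [hcos, Real.cos_pi] at hterm
  have hge : 4 * ((k : ℝ) + 1) ^ (-(2 * Δ)) ≤ covFun Δ 0 - covFun Δ (0 + h) := by
    rw [hdiff]; nlinarith [hterm]
  have hy : covFun Δ 0 - covFun Δ (0 + h) ≤ |covFun Δ (0 + h) - covFun Δ 0| := by
    rw [abs_sub_comm]; exact le_abs_self _
  -- bound k + 1 ≤ 6 L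
  have hkL : (k : ℝ) + 1 ≤ 6 * L := by
    rcases Nat.eq_zero_or_pos k with hk0 | hk1
    · rw [hk0]; push_cast; linarith
    · have hmin : ¬ π ≤ δ * (2 : ℝ) ^ (2 ^ (k - 1 + 1)) := hmink (k - 1) (by omega)
      have hk11 : k - 1 + 1 = k := by omega
      rw [hk11] at hmin
      push_neg at hmin
      have h2k : (2 : ℝ) ^ (2 ^ k) < π / δ := (lt_div_iff₀ hδ0).2 (by linarith)
      have hlogpi : Real.log π < 2 := by
        rw [Real.log_lt_iff_lt_exp pi_pos]
        have h2 : Real.exp 2 = Real.exp 1 * Real.exp 1 := by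
          rw [← Real.exp_add]; norm_num
        nlinarith [Real.exp_one_gt_d9, pi_lt_d2]
      have hlog1 : ((2 ^ k : ℕ) : ℝ) * Real.log 2 < 2 + X := by
        have := Real.log_lt_log (by positivity) h2k
        rw [Real.log_pow, Real.log_div pi_ne_zero (ne_of_gt hδ0)] at this
        push_cast at this ⊢
        linarith
      have hX27 : (2.7182818283 : ℝ) < X := lt_trans Real.exp_one_gt_d9 hX
      have hlog2 : (0.6931471803 : ℝ) < Real.log 2 := Real.log_two_gt_d9
      have hcube : ((2 ^ k : ℕ) : ℝ) < X ^ 3 := by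
        have hb : ((2 ^ k : ℕ) : ℝ) * Real.log 2 < 2 * X := by linarith
        nlinarith [pow_pos hXpos 3, sq_nonneg X, (by positivity : (0:ℝ) ≤ ((2 ^ k : ℕ) : ℝ))]
      have hklog : (k : ℝ) * Real.log 2 < 3 * L := by
        have hcast : ((2 ^ k : ℕ) : ℝ) = (2 : ℝ) ^ k := by push_cast; ring
        rw [hcast] at hcube
        have := Real.log_lt_log (by positivity) hcube
        rw [Real.log_pow, Real.log_pow] at this
        push_cast at this
        simpa [hLdef] using this
      exact aux_arith (Nat.cast_nonneg k) hL hklog hlog2 Real.log_two_lt_d9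
  -- conclude
  have hmono : (6 * L) ^ (-(2 * Δ)) ≤ ((k : ℝ) + 1) ^ (-(2 * Δ)) :=
    Real.rpow_le_rpow_of_nonpos (by positivity) hkL (by linarith)
  have hmul : (6 * L) ^ (-(2 * Δ)) = (6 : ℝ) ^ (-(2 * Δ)) * L ^ (-(2 * Δ)) :=
    Real.mul_rpow (by norm_num) (by linarith)
  have hLgoal : Real.log |Real.log δ| = L := by rw [habs]
  rw [hLgoal]
  calc 4 * (6 : ℝ) ^ (-(2 * Δ)) * L ^ (-(2 * Δ)) = 4 * (6 * L) ^ (-(2 * Δ)) := by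
        rw [hmul]; ring
    _ ≤ 4 * ((k : ℝ) + 1) ^ (-(2 * Δ)) := by linarith
    _ ≤ covFun Δ 0 - covFun Δ (0 + h) := hge
    _ ≤ |covFun Δ (0 + h) - covFun Δ 0| := hy
    _ ≤ modContR (covFun Δ) δ := hsup

lemma aux_F_tendsto {Δ : ℝ} (hΔ : 1 / 2 < Δ) {α : ℝ} (hα : 0 < α) :
    Tendsto (fun y : ℝ => 4 * (6 : ℝ) ^ (-(2 * Δ)) * Real.log (Real.log y) ^ (-(2 * Δ)) * y ^ α)
      atTop atTop := by
  have hΔ0 : 0 < Δ := by linarith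
  set C := 4 * (6 : ℝ) ^ (-(2 * Δ)) with hCdef
  have hC : 0 < C := by positivity
  set ε := α / (4 * Δ) with hεdef
  have hε : 0 < ε := by positivity
  have hbase : Tendsto (fun y : ℝ => C * ε ^ (2 * Δ) * y ^ (α / 2)) atTop atTop := by
    refine Tendsto.const_mul_atTop (by positivity) (tendsto_rpow_atTop (by linarith))
  refine tendsto_atTop_mono' atTop ?_ hbase
  filter_upwards [eventually_ge_atTop (Real.exp (Real.exp 1))] with y hy
  have hy0 : (0 : ℝ) < y := lt_of_lt_of_le (Real.exp_pos _) hy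
  have hly : Real.exp 1 ≤ Real.log y := by
    have := Real.log_le_log (Real.exp_pos _) hy
    rwa [Real.log_exp] at this
  have hly0 : 0 < Real.log y := lt_of_lt_of_le (Real.exp_pos 1) hly
  have hG1 : 1 ≤ Real.log (Real.log y) := by
    have := Real.log_le_log (Real.exp_pos 1) hly
    rwa [Real.log_exp] at this
  have hG0 : 0 < Real.log (Real.log y) := lt_of_lt_of_le one_pos hG1
  have hGle : Real.log (Real.log y) ≤ Real.log y := Real.log_le_self hly0.le
  have hεm : ε * (2 * Δ) = α / 2 := by rw [hεdef, div_mul_eq_mul_div, div_eq_div_iff (by positivity) (by norm_num)]; ring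
  have hstep : Real.log (Real.log y) ^ (2 * Δ) ≤ y ^ (α / 2) / ε ^ (2 * Δ) := by
    calc Real.log (Real.log y) ^ (2 * Δ) ≤ (y ^ ε / ε) ^ (2 * Δ) :=
          Real.rpow_le_rpow hG0.le (le_trans hGle (Real.log_le_rpow_div hy0.le hε)) (by linarith)
      _ = (y ^ ε) ^ (2 * Δ) / ε ^ (2 * Δ) := Real.div_rpow (Real.rpow_nonneg hy0.le _) hε.le _
      _ = y ^ (α / 2) / ε ^ (2 * Δ) := by rw [← Real.rpow_mul hy0.le, hεm]
  have hεpow : (0 : ℝ) < ε ^ (2 * Δ) := Real.rpow_pos_of_pos hε _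
  have hGpow : (0 : ℝ) < Real.log (Real.log y) ^ (2 * Δ) := Real.rpow_pos_of_pos hG0 _
  have h2 : ε ^ (2 * Δ) * y ^ (α / 2) * Real.log (Real.log y) ^ (2 * Δ) ≤ y ^ α := by
    calc ε ^ (2 * Δ) * y ^ (α / 2) * Real.log (Real.log y) ^ (2 * Δ)
        ≤ ε ^ (2 * Δ) * y ^ (α / 2) * (y ^ (α / 2) / ε ^ (2 * Δ)) := by
          have hyp : (0 : ℝ) ≤ ε ^ (2 * Δ) * y ^ (α / 2) := by positivity
          exact mul_le_mul_of_nonneg_left hstep hyp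
      _ = y ^ (α / 2) * y ^ (α / 2) := by field_simp
      _ = y ^ α := by rw [← Real.rpow_add hy0]; norm_num
  have hGneg : Real.log (Real.log y) ^ (-(2 * Δ)) = (Real.log (Real.log y) ^ (2 * Δ))⁻¹ :=
    Real.rpow_neg hG0.le _
  have hkey : ε ^ (2 * Δ) * y ^ (α / 2) ≤ (Real.log (Real.log y) ^ (2 * Δ))⁻¹ * y ^ α := by
    rw [inv_mul_eq_div, le_div_iff₀ hGpow]
    exact h2
  calc C * ε ^ (2 * Δ) * y ^ (α / 2) = C * (ε ^ (2 * Δ) * y ^ (α / 2)) := by ring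
    _ ≤ C * ((Real.log (Real.log y) ^ (2 * Δ))⁻¹ * y ^ α) :=
        mul_le_mul_of_nonneg_left hkey hC.le
    _ = C * Real.log (Real.log y) ^ (-(2 * Δ)) * y ^ α := by rw [hGneg]; ring

lemma aux_tendsto {Δ : ℝ} (hΔ : 1 / 2 < Δ) {α : ℝ} (hα : 0 < α) :
    Tendsto (fun δ : ℝ => modContR (covFun Δ) δ / δ ^ α)
      (nhdsWithin 0 (Set.Ioi 0)) atTop := by
  set C := 4 * (6 : ℝ) ^ (-(2 * Δ)) with hCdef
  have hC : 0 < C := by positivity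
  have hmemIoo : Set.Ioo (0 : ℝ) (Real.exp (-(Real.exp 1))) ∈ 𝓝[>] (0 : ℝ) :=
    Ioo_mem_nhdsGT (Real.exp_pos _)
  have hlow : Tendsto (fun δ : ℝ => C * Real.log |Real.log δ| ^ (-(2 * Δ)) / δ ^ α)
      (𝓝[>] (0 : ℝ)) atTop := by
    have hcomp : Tendsto
        (fun δ : ℝ => C * Real.log (Real.log δ⁻¹) ^ (-(2 * Δ)) * (δ⁻¹) ^ α)
        (𝓝[>] (0 : ℝ)) atTop :=
      (aux_F_tendsto hΔ hα).comp tendsto_inv_nhdsGT_zero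
    refine hcomp.congr' ?_
    filter_upwards [hmemIoo] with δ hδ
    have hδ0 : 0 < δ := hδ.1
    have hlogneg : Real.log δ < 0 := by
      have := Real.log_lt_log hδ0 hδ.2
      rw [Real.log_exp] at this
      have := Real.exp_pos 1
      linarith
    rw [Real.log_inv, abs_of_neg hlogneg, Real.inv_rpow hδ0.le, ← div_eq_mul_inv]
  refine tendsto_atTop_mono' _ ?_ hlow
  filter_upwards [hmemIoo] with δ hδ
  have hδα : (0 : ℝ) < δ ^ α := Real.rpow_pos_of_pos hδ.1 _
  gcongr
  exact aux_lower hΔ hδ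

/-- `ω[r](δ) ≥ C (ln |ln δ|)^{-2Δ}` on `(0, e^{-e})`; in particular
`ω[r](δ)/δ^α → ∞` as `δ → 0⁺` for every `α > 0`, so `r` is not Hölder continuous
of any positive order. -/
theorem covFun_modCont_lower_not_Holder (Δ : ℝ) (hΔ : 1 / 2 < Δ) :
    (∃ C : ℝ, 0 < C ∧ ∀ δ : ℝ, δ ∈ Set.Ioo (0 : ℝ) (Real.exp (-(Real.exp 1))) →
        C * Real.log |Real.log δ| ^ (-(2 * Δ)) ≤ modContR (covFun Δ) δ)
    ∧ (∀ α : ℝ, 0 < α →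
        Tendsto (fun δ : ℝ => modContR (covFun Δ) δ / δ ^ α)
          (nhdsWithin 0 (Set.Ioi 0)) atTop)
    ∧ (∀ α : ℝ, 0 < α →
        ¬ ∃ C' : ℝ, ∀ t s : ℝ, |covFun Δ t - covFun Δ s| ≤ C' * |t - s| ^ α) := by
  refine ⟨⟨4 * (6 : ℝ) ^ (-(2 * Δ)), by positivity, fun δ hδ => aux_lower hΔ hδ⟩,
    fun α hα => aux_tendsto hΔ hα, fun α hα => ?_⟩
  rintro ⟨C', hC'⟩
  have hC'0 : 0 ≤ C' := by
    have h10 := hC' 1 0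
    have : |(1 : ℝ) - 0| ^ α = 1 := by
      norm_num
    rw [this, mul_one] at h10
    exact le_trans (abs_nonneg _) h10
  have hub : ∀ δ : ℝ, 0 < δ → modContR (covFun Δ) δ ≤ C' * δ ^ α := by
    intro δ hδ
    refine csSup_le ⟨|covFun Δ (0 + 0) - covFun Δ 0|, 0, 0, by simpa using hδ.le, rfl⟩ ?_
    rintro y ⟨t, h, hh, rfl⟩
    calc |covFun Δ (t + h) - covFun Δ t| ≤ C' * |t + h - t| ^ α := hC' _ _
      _ = C' * |h| ^ α := by rw [add_sub_cancel_left]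
      _ ≤ C' * δ ^ α :=
          mul_le_mul_of_nonneg_left (Real.rpow_le_rpow (abs_nonneg _) hh hα.le) hC'0
  have hev := (aux_tendsto hΔ hα).eventually_ge_atTop (C' + 1)
  obtain ⟨δ, hδge, hδIoi⟩ := (hev.and self_mem_nhdsWithin).exists
  have hδ0 : (0 : ℝ) < δ := hδIoi
  have hδα : (0 : ℝ) < δ ^ α := Real.rpow_pos_of_pos hδ0 _
  have : modContR (covFun Δ) δ / δ ^ α ≤ C' := by
    rw [div_le_iff₀ hδα]
    calc modContR (covFun Δ) δ ≤ C' * δ ^ α := hub δ hδ0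
      _ = C' * δ ^ α := rfl
  linarith
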